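/- Let $w_1,\dots,w_t$ be vectors in $\mathbb{R}^k$ with $\|w_\tau\| \le L$ for all $\tau$, and define $W_s = I + \sum_{\tau=1}^{s-1} w_\tau w_\tau^\top$. Then $\sum_{s=1}^t \min(1, \|w_s\|_{W_s^{-1}}^2) \le 2k \log(1 + tL^2/k)$, where $\|w\|_{M}^2 = w^\top M w$. -/

import Mathlib

open Matrix Finset

/-- `W s = I + ∑_{τ < s} w_τ w_τᵀ` (0-indexed version of `W_s = I + ∑_{τ=1}^{s-1} w_τ w_τᵀ`). -/
noncomputable def designMatrix {k : ℕ} (w : ℕ → Fin k → ℝ) (s : ℕ) :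
    Matrix (Fin k) (Fin k) ℝ :=
  1 + ∑ τ ∈ Finset.range s, Matrix.vecMulVec (w τ) (w τ)

lemma psd_vmv {k : ℕ} (v : Fin k → ℝ) : (vecMulVec v v).PosSemidef := by
  have hv : vecMulVec v v = (replicateRow (Fin 1) v)ᴴ * replicateRow (Fin 1) v := by
    rw [vecMulVec_eq (Fin 1)]; congr 1
  rw [hv]; exact posSemidef_conjTranspose_mul_self _

lemma pd_design {k : ℕ} (w : ℕ → Fin k → ℝ) (s : ℕ) : (designMatrix w s).PosDef := by
  unfold designMatrix
  refine Matrix.PosDef.add_posSemidef Matrix.PosDef.one ?_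
  exact Finset.sum_induction _ _ (fun a b ha hb => ha.add hb) Matrix.PosSemidef.zero
    (fun τ _ => psd_vmv (w τ))

lemma quad_nonneg {k : ℕ} (w : ℕ → Fin k → ℝ) (s : ℕ) :
    0 ≤ w s ⬝ᵥ (designMatrix w s)⁻¹.mulVec (w s) := by
  have h := ((pd_design w s).inv).posSemidef.dotProduct_mulVec_nonneg (w s)
  simpa using h

lemma det_rank_one_update {k : ℕ} (A : Matrix (Fin k) (Fin k) ℝ) (hA : IsUnit A.det)
    (v : Fin k → ℝ) :
    (A + vecMulVec v v).det = A.det * (1 + v ⬝ᵥ A⁻¹.mulVec v) := by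
  rw [vecMulVec_eq Unit, det_add_replicateCol_mul_replicateRow hA]
  congr 1
  rw [det_unique]
  simp only [Matrix.add_apply, Matrix.one_apply_eq, Matrix.mul_apply, Matrix.replicateRow_apply,
    Matrix.replicateCol_apply, dotProduct, mulVec, Finset.sum_mul]
  congr 1
  rw [Finset.sum_comm]
  exact Finset.sum_congr rfl fun x _ => by
    rw [Finset.mul_sum]
    exact Finset.sum_congr rfl fun y _ => by ring

lemma design_succ {k : ℕ} (w : ℕ → Fin k → ℝ) (s : ℕ) :
    designMatrix w (s+1) = designMatrix w s + vecMulVec (w s) (w s) := by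
  unfold designMatrix
  rw [Finset.sum_range_succ, add_assoc]

lemma trace_vmv {k : ℕ} (v : Fin k → ℝ) : (vecMulVec v v).trace = v ⬝ᵥ v := by
  simp [Matrix.trace, vecMulVec, Matrix.diag, dotProduct]

lemma trace_design {k : ℕ} (w : ℕ → Fin k → ℝ) (t : ℕ) :
    (designMatrix w t).trace = k + ∑ τ ∈ Finset.range t, (w τ ⬝ᵥ w τ) := by
  unfold designMatrix
  rw [Matrix.trace_add, Matrix.trace_one, Matrix.trace_sum]
  simp [trace_vmv]

lemma sum_eigenvalues_eq_trace {k : ℕ} {A : Matrix (Fin k) (Fin k) ℝ} (hA : A.IsHermitian) :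
    ∑ i, hA.eigenvalues i = A.trace := by
  simpa using hA.trace_eq_sum_eigenvalues.symm

lemma log_det_le {k : ℕ} (hk : 0 < k) {A : Matrix (Fin k) (Fin k) ℝ} (hA : A.PosDef) :
    Real.log A.det ≤ k * Real.log (A.trace / k) := by
  set lam := hA.isHermitian.eigenvalues with hlam
  have hpos : ∀ i, 0 < lam i := hA.eigenvalues_pos
  have hdet : A.det = ∏ i, lam i := by
    have := hA.isHermitian.det_eq_prod_eigenvalues
    push_cast at this
    exact this
  have hlog : Real.log A.det = ∑ i, Real.log (lam i) := by
    rw [hdet, Real.log_prod (fun i _ => (hpos i).ne')]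
  have hk' : ((k:ℝ))⁻¹ * k = 1 := inv_mul_cancel₀ (Nat.cast_ne_zero.mpr hk.ne')
  have jensen := (strictConcaveOn_log_Ioi.concaveOn).le_map_sum
    (t := Finset.univ) (w := fun _ : Fin k => (k:ℝ)⁻¹) (p := lam)
    (fun i _ => by positivity) (by simp [hk']; rw [mul_comm]; exact hk')
    (fun i _ => hpos i)
  simp only [smul_eq_mul] at jensen
  have hsum : ∑ i, (k:ℝ)⁻¹ * lam i = A.trace / k := by
    rw [← Finset.mul_sum, sum_eigenvalues_eq_trace, div_eq_inv_mul]
  rw [hsum] at jensen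
  calc Real.log A.det = ∑ i, Real.log (lam i) := hlog
    _ = k * ∑ i, (k:ℝ)⁻¹ * Real.log (lam i) := by
        rw [← Finset.mul_sum, ← mul_assoc, mul_comm (k:ℝ), hk', one_mul]
    _ ≤ k * Real.log (A.trace / k) := by
        exact mul_le_mul_of_nonneg_left jensen (by positivity)

lemma min_le_two_log {x : ℝ} (hx : 0 ≤ x) : min 1 x ≤ 2 * Real.log (1 + x) := by
  have h1x : (0:ℝ) < 1 + x := by linarith
  rcases le_or_gt x 1 with h | h
  · rw [min_eq_right h]
    have hlog := Real.log_le_sub_one_of_pos (inv_pos.mpr h1x)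
    rw [Real.log_inv] at hlog
    have h2 : (1:ℝ) - (1+x)⁻¹ = x / (1+x) := by field_simp; ring
    have h3 : x / 2 ≤ x / (1+x) := by
      apply div_le_div_of_nonneg_left hx h1x (by linarith)
    linarith
  · rw [min_eq_left h.le]
    have hlog : Real.log 2 ≤ Real.log (1+x) := Real.log_le_log (by norm_num) (by linarith)
    have := Real.log_two_gt_d9
    linarith

lemma det_design_prod {k : ℕ} (w : ℕ → Fin k → ℝ) (t : ℕ) :
    (designMatrix w t).det =
      ∏ s ∈ Finset.range t, (1 + w s ⬝ᵥ (designMatrix w s)⁻¹.mulVec (w s)) := by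
  induction t with
  | zero => simp [designMatrix]
  | succ n ih =>
      rw [design_succ, det_rank_one_update _ (pd_design w n).det_pos.ne'.isUnit,
        Finset.prod_range_succ, ih]

/-- Elliptical potential lemma: if `‖w_τ‖ ≤ L` for all `τ`, then
`∑_{s=1}^t min(1, ‖w_s‖²_{W_s⁻¹}) ≤ 2 k log(1 + t L² / k)`. -/
theorem stmt0 (k t : ℕ) (L : ℝ) (w : ℕ → Fin k → ℝ)
    (hL : ∀ τ, Real.sqrt (w τ ⬝ᵥ w τ) ≤ L) :
    ∑ s ∈ Finset.range t,
        min 1 (w s ⬝ᵥ (designMatrix w s)⁻¹.mulVec (w s)) ≤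
      2 * k * Real.log (1 + t * L ^ 2 / k) := by
  rcases Nat.eq_zero_or_pos k with hk | hk
  · subst hk
    simp [dotProduct]
  have hL0 : 0 ≤ L := (Real.sqrt_nonneg _).trans (hL 0)
  have hwnn : ∀ τ, 0 ≤ w τ ⬝ᵥ w τ := fun τ =>
    Finset.sum_nonneg fun i _ => mul_self_nonneg _
  have hwL : ∀ τ, w τ ⬝ᵥ w τ ≤ L ^ 2 := fun τ => by
    rw [← Real.sq_sqrt (hwnn τ)]
    exact pow_le_pow_left₀ (Real.sqrt_nonneg _) (hL τ) 2
  set x : ℕ → ℝ := fun s => w s ⬝ᵥ (designMatrix w s)⁻¹.mulVec (w s) with hxdef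
  have hx : ∀ s, 0 ≤ x s := fun s => quad_nonneg w s
  -- step 1: sum of mins ≤ 2 log det
  have step1 : ∑ s ∈ Finset.range t, min 1 (x s) ≤
      2 * Real.log ((designMatrix w t).det) := by
    calc ∑ s ∈ Finset.range t, min 1 (x s)
        ≤ ∑ s ∈ Finset.range t, 2 * Real.log (1 + x s) :=
          Finset.sum_le_sum fun s _ => min_le_two_log (hx s)
      _ = 2 * ∑ s ∈ Finset.range t, Real.log (1 + x s) := by rw [Finset.mul_sum]
      _ = 2 * Real.log ((designMatrix w t).det) := by
          rw [det_design_prod, Real.log_prod]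
          intro s _
          have := hx s
          positivity
  -- step 2: log det ≤ k log (trace/k) ≤ k log (1 + t L²/k)
  have htr : (designMatrix w t).trace ≤ k + t * L ^ 2 := by
    rw [trace_design]
    have : ∑ τ ∈ Finset.range t, (w τ ⬝ᵥ w τ) ≤ ∑ τ ∈ Finset.range t, L ^ 2 :=
      Finset.sum_le_sum fun τ _ => hwL τ
    simp only [Finset.sum_const, Finset.card_range, nsmul_eq_mul] at this
    linarith
  have hkpos : (0:ℝ) < k := Nat.cast_pos.mpr hk
  have htrpos : (0:ℝ) < (designMatrix w t).trace := by
    rw [trace_design]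
    have := Finset.sum_nonneg fun τ (_ : τ ∈ Finset.range t) => hwnn τ
    linarith
  have step2 : Real.log ((designMatrix w t).det) ≤
      k * Real.log (1 + t * L ^ 2 / k) := by
    refine (log_det_le hk (pd_design w t)).trans ?_
    refine mul_le_mul_of_nonneg_left ?_ hkpos.le
    refine Real.log_le_log (by positivity) ?_
    rw [div_le_iff₀ hkpos, add_mul, one_mul, div_mul_cancel₀ _ hkpos.ne']
    linarith
  calc ∑ s ∈ Finset.range t, min 1 (x s)
      ≤ 2 * Real.log ((designMatrix w t).det) := step1
    _ ≤ 2 * (k * Real.log (1 + t * L ^ 2 / k)) := by linarith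
    _ = 2 * k * Real.log (1 + t * L ^ 2 / k) := by ring
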